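/- arXiv:0806.0055 — 2 statements merged into one kernel-verified Lean document; each statement's English description precedes it below -/
import Mathlib

section
/- For positive integers j, k the double integral α_{2j-1,2k}[1] = ∫_ℝ ∫_ℝ e^{-(x²+y²)/2} x^{2j-2} y^{2k-1} sgn(y−x) dx dy satisfies the recursion α_{2j-1,2k}[1] = 2(k−1) α_{2j-1,2k-2}[1] + 2 Γ(j+k−3/2), and consequently has the closed form α_{2j-1,2k}[1] = 2^k (k−1)! Σ_{p=1}^{k} Γ(j+p−3/2) / (2^{p-1} (p−1)!). -/
open MeasureTheory Real Set Filter

/-- `α_{j,k}[1] = ∫∫ e^{-(x²+y²)/2} x^{j-1} y^{k-1} sgn(y-x) dx dy`. -/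
noncomputable def alpha (j k : ℕ) : ℝ :=
  ∫ x : ℝ, ∫ y : ℝ, Real.exp (-(x ^ 2 + y ^ 2) / 2) * x ^ (j - 1) * y ^ (k - 1) *
    Real.sign (y - x)


open MeasureTheory Real Set Filter

noncomputable def gcoef (k i : ℕ) : ℝ := 2 ^ (k - 1 - i) * (k - 1).factorial / i.factorial

noncomputable def gpoly (k : ℕ) (x : ℝ) : ℝ := ∑ i ∈ Finset.range k, gcoef k i * x ^ (2 * i)

lemma gstep (m i : ℕ) (hi : i ≤ m) : gcoef (m + 2) i = 2 * (m + 1) * gcoef (m + 1) i := by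
  unfold gcoef
  have h1 : m + 2 - 1 - i = (m - i) + 1 := by omega
  have h2 : m + 1 - 1 - i = m - i := by omega
  have h3 : m + 2 - 1 = m + 1 := by omega
  have h4 : m + 1 - 1 = m := by omega
  rw [h1, h2, h3, h4, Nat.factorial_succ]
  push_cast
  ring

lemma gdiag (k : ℕ) : gcoef (k + 1) k = 1 := by
  unfold gcoef
  have h1 : k + 1 - 1 - k = 0 := by omega
  rw [h1]
  have := Nat.factorial_pos k
  field_simp
  simp

lemma gpoly_step (m : ℕ) (x : ℝ) :
    gpoly (m + 2) x = 2 * (m + 1) * gpoly (m + 1) x + x ^ (2 * (m + 1)) := by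
  unfold gpoly
  rw [Finset.sum_range_succ, gdiag, one_mul, Finset.mul_sum]
  congr 1
  refine Finset.sum_congr rfl fun i hi => ?_
  rw [gstep m i (by simpa using Nat.lt_succ_iff.mp (Finset.mem_range.mp hi))]
  ring

lemma hasDeriv_exp_part (y : ℝ) :
    HasDerivAt (fun y : ℝ => Real.exp (-y ^ 2 / 2)) (-y * Real.exp (-y ^ 2 / 2)) y := by
  have h1 : HasDerivAt (fun y : ℝ => -y ^ 2 / 2) (-y) y := by
    have := ((hasDerivAt_pow 2 y).neg).div_const 2
    refine this.congr_deriv ?_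
    simp
    ring
  have := h1.exp
  convert this using 1
  ring

lemma hasDeriv_main (m : ℕ) (y : ℝ) :
    HasDerivAt (fun y : ℝ => -(gpoly (m + 1) y * Real.exp (-y ^ 2 / 2)))
      (y ^ (2 * m + 1) * Real.exp (-y ^ 2 / 2)) y := by
  induction m generalizing y with
  | zero =>
    have hfun : (fun y : ℝ => -(gpoly 1 y * Real.exp (-y ^ 2 / 2)))
        = fun y : ℝ => -Real.exp (-y ^ 2 / 2) := by
      funext y
      simp [gpoly, gcoef]
    rw [hfun]
    have := (hasDeriv_exp_part y).neg
    refine this.congr_deriv ?_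
    ring
  | succ m ih =>
    have hfun : (fun y : ℝ => -(gpoly (m + 2) y * Real.exp (-y ^ 2 / 2)))
        = fun y : ℝ => (2 * (m + 1) : ℝ) * -(gpoly (m + 1) y * Real.exp (-y ^ 2 / 2))
          + -(y ^ (2 * (m + 1)) * Real.exp (-y ^ 2 / 2)) := by
      funext y
      rw [gpoly_step]
      ring
    rw [hfun]
    have h1 := (ih y).const_mul (2 * (m + 1) : ℝ)
    have h2 := (((hasDerivAt_pow (2 * (m + 1)) y).mul (hasDeriv_exp_part y)).neg)
    have h3 := h1.add h2
    refine h3.congr_deriv ?_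
    have he : 2 * (m + 1) - 1 = 2 * m + 1 := by omega
    rw [he]
    push_cast
    ring

lemma integrable_pow_gauss_half (n : ℕ) :
    Integrable (fun y : ℝ => y ^ n * Real.exp (-y ^ 2 / 2)) := by
  have h := integrable_rpow_mul_exp_neg_mul_sq (b := 1/2) (by norm_num) (s := (n : ℝ))
    (by exact_mod_cast neg_one_lt_zero.trans_le (Nat.cast_nonneg n))
  simp only [Real.rpow_natCast] at h
  convert h using 2 with y
  ring_nf

lemma integrable_pow_gauss (n : ℕ) :
    Integrable (fun y : ℝ => y ^ n * Real.exp (-y ^ 2)) := by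
  have h := integrable_rpow_mul_exp_neg_mul_sq (b := 1) (by norm_num) (s := (n : ℝ))
    (by exact_mod_cast neg_one_lt_zero.trans_le (Nat.cast_nonneg n))
  simp only [Real.rpow_natCast] at h
  convert h using 2 with y
  ring_nf

lemma tendsto_monomial_gauss_atTop (i : ℕ) :
    Tendsto (fun y : ℝ => y ^ (2 * i) * Real.exp (-y ^ 2 / 2)) atTop (nhds 0) := by
  have h1 : Tendsto (fun t : ℝ => (2 * t) ^ i * Real.exp (-t)) atTop (nhds 0) := by
    have := (tendsto_pow_mul_exp_neg_atTop_nhds_zero i).const_mul ((2 : ℝ) ^ i)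
    rw [mul_zero] at this
    convert this using 2 with t
    rw [mul_pow]
    ring
  have h2 : Tendsto (fun y : ℝ => y ^ 2 / 2) atTop atTop := by
    apply Tendsto.atTop_div_const (by norm_num)
    exact tendsto_pow_atTop (by norm_num)
  have := h1.comp h2
  convert this using 2 with y
  simp only [Function.comp_apply]
  rw [show (2 : ℝ) * (y ^ 2 / 2) = y ^ 2 by ring, ← pow_mul]
  ring_nf

lemma tendsto_monomial_gauss_atBot (i : ℕ) :
    Tendsto (fun y : ℝ => y ^ (2 * i) * Real.exp (-y ^ 2 / 2)) atBot (nhds 0) := by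
  have h := (tendsto_monomial_gauss_atTop i).comp tendsto_neg_atBot_atTop
  convert h using 2 with y
  simp only [Function.comp_apply]
  rw [show (-y) ^ 2 = y ^ 2 by ring, show (-y) ^ (2*i) = y ^ (2*i) by
    rw [pow_mul, pow_mul, neg_sq]]

lemma tendsto_gpoly_gauss (k : ℕ) (l : Filter ℝ)
    (h : ∀ i : ℕ, Tendsto (fun y : ℝ => y ^ (2 * i) * Real.exp (-y ^ 2 / 2)) l (nhds 0)) :
    Tendsto (fun y : ℝ => -(gpoly k y * Real.exp (-y ^ 2 / 2))) l (nhds 0) := by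
  have hfun : (fun y : ℝ => -(gpoly k y * Real.exp (-y ^ 2 / 2)))
      = fun y : ℝ => -(∑ i ∈ Finset.range k, gcoef k i * (y ^ (2 * i) * Real.exp (-y ^ 2 / 2))) := by
    funext y
    unfold gpoly
    rw [Finset.sum_mul]
    congr 1
    exact Finset.sum_congr rfl fun i _ => by ring
  rw [hfun]
  have : Tendsto (fun y : ℝ => ∑ i ∈ Finset.range k, gcoef k i * (y ^ (2 * i) * Real.exp (-y ^ 2 / 2)))
      l (nhds 0) := by
    have := tendsto_finset_sum (Finset.range k)
      (fun i _ => ((h i).const_mul (gcoef k i)))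
    simpa using this
  simpa using this.neg

lemma integral_Iic_pow_gauss (m : ℕ) (x : ℝ) :
    ∫ y in Iic x, y ^ (2 * m + 1) * Real.exp (-y ^ 2 / 2)
      = -(gpoly (m + 1) x * Real.exp (-x ^ 2 / 2)) := by
  have h := integral_Iic_of_hasDerivAt_of_tendsto' (a := x)
    (fun y _ => hasDeriv_main m y)
    ((integrable_pow_gauss_half (2 * m + 1)).integrableOn)
    (tendsto_gpoly_gauss (m + 1) atBot fun i => tendsto_monomial_gauss_atBot i)
  rw [h, sub_zero]

lemma integral_Ioi_pow_gauss (m : ℕ) (x : ℝ) :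
    ∫ y in Ioi x, y ^ (2 * m + 1) * Real.exp (-y ^ 2 / 2)
      = gpoly (m + 1) x * Real.exp (-x ^ 2 / 2) := by
  have h := integral_Ioi_of_hasDerivAt_of_tendsto' (a := x)
    (fun y _ => hasDeriv_main m y)
    ((integrable_pow_gauss_half (2 * m + 1)).integrableOn)
    (tendsto_gpoly_gauss (m + 1) atTop fun i => tendsto_monomial_gauss_atTop i)
  rw [h, zero_sub, neg_neg]

lemma integral_sign_gauss (m : ℕ) (x : ℝ) :
    ∫ y : ℝ, y ^ (2 * m + 1) * Real.exp (-y ^ 2 / 2) * Real.sign (y - x)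
      = 2 * (gpoly (m + 1) x * Real.exp (-x ^ 2 / 2)) := by
  set f : ℝ → ℝ := fun y => y ^ (2 * m + 1) * Real.exp (-y ^ 2 / 2) with hf
  have hxae : ∀ᵐ y : ℝ, y ≠ x := by
    rw [ae_iff]
    convert Real.volume_singleton (a := x) using 2
    ext y
    simp
  have hae : (fun y : ℝ => f y * Real.sign (y - x))
      =ᵐ[volume] fun y => (Ioi x).indicator f y - (Iic x).indicator f y := by
    filter_upwards [hxae] with y hy
    rcases lt_or_gt_of_ne hy with h | h
    · rw [Real.sign_of_neg (by linarith : y - x < 0),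
        Set.indicator_of_notMem (by simpa using h.le.not_gt) f,
        Set.indicator_of_mem (by simpa using h.le) f]
      ring
    · rw [Real.sign_of_pos (by linarith : 0 < y - x),
        Set.indicator_of_mem (by simpa using h) f,
        Set.indicator_of_notMem (by simpa using h) f]
      ring
  rw [integral_congr_ae hae,
    integral_sub ((integrable_pow_gauss_half (2*m+1)).indicator measurableSet_Ioi)
      ((integrable_pow_gauss_half (2*m+1)).indicator measurableSet_Iic),
    integral_indicator measurableSet_Ioi, integral_indicator measurableSet_Iic,
    integral_Ioi_pow_gauss, integral_Iic_pow_gauss]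
  ring

lemma gauss_moment (m : ℕ) :
    ∫ x : ℝ, x ^ (2 * m) * Real.exp (-x ^ 2) = Real.Gamma ((m : ℝ) + 1 / 2) := by
  have heven : (fun x : ℝ => x ^ (2 * m) * Real.exp (-x ^ 2))
      = fun x : ℝ => |x| ^ (2 * m) * Real.exp (-|x| ^ 2) := by
    funext x
    rw [pow_mul, pow_mul, sq_abs]
  rw [heven, integral_comp_abs (f := fun t : ℝ => t ^ (2 * m) * Real.exp (-t ^ 2))]
  have hIoi : ∫ t in Ioi (0:ℝ), t ^ (2 * m) * Real.exp (-t ^ 2)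
      = ∫ t in Ioi (0:ℝ), t ^ ((2 * m : ℕ) : ℝ) * Real.exp (-t ^ (2:ℝ)) := by
    refine setIntegral_congr_fun measurableSet_Ioi fun t ht => ?_
    rw [Real.rpow_natCast, show ((2:ℝ)) = ((2:ℕ):ℝ) by norm_num, Real.rpow_natCast]
  rw [hIoi, integral_rpow_mul_exp_neg_rpow (by norm_num)
    (by exact_mod_cast neg_one_lt_zero.trans_le (Nat.cast_nonneg (2*m)))]
  rw [show (((2*m : ℕ):ℝ) + 1) / 2 = (m : ℝ) + 1/2 by push_cast; ring]
  ring

lemma alphaval (n m : ℕ) :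
    alpha (2 * (n + 1) - 1) (2 * (m + 1)) =
      2 * ∑ i ∈ Finset.range (m + 1),
        gcoef (m + 1) i * Real.Gamma ((n : ℝ) + (i : ℝ) + 1 / 2) := by
  unfold alpha
  have e1 : 2 * (n + 1) - 1 - 1 = 2 * n := by omega
  have e2 : 2 * (m + 1) - 1 = 2 * m + 1 := by omega
  rw [e1, e2]
  have hinner : ∀ x : ℝ,
      (∫ y : ℝ, Real.exp (-(x ^ 2 + y ^ 2) / 2) * x ^ (2 * n) * y ^ (2 * m + 1) *
        Real.sign (y - x))
      = ∑ i ∈ Finset.range (m + 1),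
          (2 * gcoef (m + 1) i) * (x ^ (2 * (n + i)) * Real.exp (-x ^ 2)) := by
    intro x
    have hsplit : (fun y : ℝ => Real.exp (-(x ^ 2 + y ^ 2) / 2) * x ^ (2 * n) * y ^ (2 * m + 1) *
        Real.sign (y - x))
        = fun y : ℝ => (Real.exp (-x ^ 2 / 2) * x ^ (2 * n)) *
            (y ^ (2 * m + 1) * Real.exp (-y ^ 2 / 2) * Real.sign (y - x)) := by
      funext y
      rw [show -(x ^ 2 + y ^ 2) / 2 = (-x ^ 2 / 2) + (-y ^ 2 / 2) by ring, Real.exp_add]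
      ring
    rw [hsplit, integral_const_mul, integral_sign_gauss m x]
    unfold gpoly
    rw [Finset.sum_mul, Finset.mul_sum, Finset.mul_sum]
    refine Finset.sum_congr rfl fun i _ => ?_
    rw [show -x ^ 2 = (-x ^ 2 / 2) + (-x ^ 2 / 2) by ring, Real.exp_add,
      show 2 * (n + i) = 2 * n + 2 * i by ring, pow_add]
    ring
  rw [show (fun x : ℝ => ∫ y : ℝ, Real.exp (-(x ^ 2 + y ^ 2) / 2) * x ^ (2 * n) *
      y ^ (2 * m + 1) * Real.sign (y - x))
    = fun x : ℝ => ∑ i ∈ Finset.range (m + 1),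
        (2 * gcoef (m + 1) i) * (x ^ (2 * (n + i)) * Real.exp (-x ^ 2)) from funext hinner]
  rw [integral_finset_sum _ (fun i _ =>
    ((integrable_pow_gauss (2 * (n + i))).const_mul (2 * gcoef (m + 1) i)))]
  rw [Finset.mul_sum]
  refine Finset.sum_congr rfl fun i _ => ?_
  rw [integral_const_mul, gauss_moment (n + i)]
  push_cast
  ring_nf


/-- recursion and closed form for `α_{2j-1,2k}[1]`. -/
theorem alpha_odd_even (j : ℕ) (hj : 1 ≤ j) :
    (∀ k : ℕ, 2 ≤ k →
      alpha (2 * j - 1) (2 * k) =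
        2 * ((k : ℝ) - 1) * alpha (2 * j - 1) (2 * (k - 1)) +
          2 * Real.Gamma ((j : ℝ) + (k : ℝ) - 3 / 2)) ∧
    (∀ k : ℕ, 1 ≤ k →
      alpha (2 * j - 1) (2 * k) =
        2 ^ k * (k - 1).factorial *
          ∑ p ∈ Finset.Icc 1 k,
            Real.Gamma ((j : ℝ) + (p : ℝ) - 3 / 2) / (2 ^ (p - 1) * (p - 1).factorial)) := by
  obtain ⟨n, rfl⟩ : ∃ n, j = n + 1 := ⟨j - 1, by omega⟩
  constructor
  · intro k hk
    obtain ⟨m, rfl⟩ : ∃ m, k = m + 2 := ⟨k - 2, by omega⟩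
    have hk1 : m + 2 - 1 = m + 1 := by omega
    rw [hk1, alphaval n (m + 1), alphaval n m, Finset.sum_range_succ, gdiag]
    have hstep : ∑ i ∈ Finset.range (m + 1),
        gcoef (m + 2) i * Real.Gamma ((n : ℝ) + (i : ℝ) + 1 / 2)
        = (2 * ((m : ℝ) + 1)) * ∑ i ∈ Finset.range (m + 1),
            gcoef (m + 1) i * Real.Gamma ((n : ℝ) + (i : ℝ) + 1 / 2) := by
      rw [Finset.mul_sum]
      refine Finset.sum_congr rfl fun i hi => ?_
      rw [gstep m i (by simpa using Nat.lt_succ_iff.mp (Finset.mem_range.mp hi))]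
      ring
    rw [hstep, show ((n : ℝ) + ((m : ℕ) + 1 : ℕ) + 1 / 2 : ℝ)
      = ((n + 1 : ℕ) : ℝ) + ((m + 2 : ℕ) : ℝ) - 3 / 2 by push_cast; ring]
    push_cast
    ring
  · intro k hk
    obtain ⟨m, rfl⟩ : ∃ m, k = m + 1 := ⟨k - 1, by omega⟩
    rw [alphaval n m, show m + 1 - 1 = m from rfl, ← Finset.Ico_add_one_right_eq_Icc,
      Finset.sum_Ico_eq_sum_range, show m + 1 + 1 - 1 = m + 1 from rfl, Finset.mul_sum, Finset.mul_sum]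
    refine Finset.sum_congr rfl fun i hi => ?_
    have him : i ≤ m := Nat.lt_succ_iff.mp (Finset.mem_range.mp hi)
    have h1 : 1 + i - 1 = i := by omega
    rw [h1, show (((n + 1 : ℕ) : ℝ) + ((1 + i : ℕ) : ℝ) - 3 / 2 : ℝ)
      = ((n : ℝ) + (i : ℝ) + 1 / 2) by push_cast; ring]
    unfold gcoef
    have h2 : m + 1 - 1 - i = m - i := by omega
    rw [h2]
    have h3 : (2:ℝ) ^ (m + 1) = 2 ^ (m - i) * 2 ^ i * 2 := by
      rw [pow_succ, ← pow_add, Nat.sub_add_cancel him]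
    rw [h3]
    have hfi : (i.factorial : ℝ) ≠ 0 := Nat.cast_ne_zero.mpr (Nat.factorial_ne_zero i)
    have h2i : ((2 : ℝ) ^ i) ≠ 0 := by positivity
    field_simp
    ring
    simp
end

section
/- For n ≥ 0, the complementary error function integral ∫_ℝ e^{-x²} H_{2n}(x y) dx = √π ((2n)!/n!) (y² − 1)^n holds for all real y. -/
open MeasureTheory

/-- Physicists' Hermite polynomials via the three-term recurrence. -/
noncomputable def physHermite : ℕ → ℝ → ℝ
  | 0, _ => 1
  | 1, x => 2 * x
  | (n + 2), x => 2 * x * physHermite (n + 1) x - 2 * (n + 1) * physHermite n x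


lemma physHermite_succ' (n : ℕ) (x : ℝ) :
    physHermite (n + 1) x = 2 * x * physHermite n x - 2 * n * physHermite (n - 1) x := by
  match n with
  | 0 => simp [physHermite]
  | m + 1 => simp [physHermite]

lemma physHermite_hasDerivAt_pair (n : ℕ) :
    (∀ x : ℝ, HasDerivAt (physHermite n) (2 * n * physHermite (n - 1) x) x) ∧
    (∀ x : ℝ, HasDerivAt (physHermite (n + 1)) (2 * (n + 1) * physHermite n x) x) := by
  induction n with
  | zero =>
    constructor
    · intro x
      simpa [physHermite] using (hasDerivAt_const x (1 : ℝ))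
    · intro x
      have : HasDerivAt (fun t : ℝ => 2 * t) 2 x := by
        simpa using (hasDerivAt_id x).const_mul (2 : ℝ)
      simpa [physHermite] using this.congr_deriv (by norm_num)
  | succ m ih =>
    refine ⟨fun x => by simpa using ih.2 x, fun x => ?_⟩
    have h1 := ih.2 x
    have h2 := ih.1 x
    have hmul : HasDerivAt (fun t : ℝ => 2 * t * physHermite (m + 1) t)
        (2 * physHermite (m + 1) x + 2 * x * (2 * (m + 1) * physHermite m x)) x := by
      have := (((hasDerivAt_id x).const_mul (2 : ℝ))).fun_mul h1
      refine this.congr_deriv ?_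
      simp only [id_eq]
      ring
    have hsub : HasDerivAt (fun t : ℝ =>
        2 * t * physHermite (m + 1) t - 2 * (m + 1) * physHermite m t)
        (2 * physHermite (m + 1) x + 2 * x * (2 * (m + 1) * physHermite m x)
          - 2 * (m + 1) * (2 * m * physHermite (m - 1) x)) x :=
      hmul.sub (h2.const_mul (2 * ((m : ℝ) + 1)))
    have heq : physHermite (m + 2) = fun t =>
        2 * t * physHermite (m + 1) t - 2 * (m + 1) * physHermite m t := by
      funext t; simp [physHermite]
    rw [show ((m : ℕ) + 1 + 1) = m + 2 from rfl, heq]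
    convert hsub using 1
    have hrec := physHermite_succ' m x
    push_cast
    rw [hrec]
    ring

lemma physHermite_exists_poly (n : ℕ) :
    (∃ p : Polynomial ℝ, ∀ x, physHermite n x = p.eval x) ∧
    (∃ p : Polynomial ℝ, ∀ x, physHermite (n + 1) x = p.eval x) := by
  induction n with
  | zero =>
    exact ⟨⟨1, by simp [physHermite]⟩, ⟨Polynomial.C 2 * Polynomial.X, by simp [physHermite]⟩⟩
  | succ m ih =>
    obtain ⟨⟨p, hp⟩, ⟨q, hq⟩⟩ := ih
    refine ⟨⟨q, hq⟩, ⟨Polynomial.C 2 * Polynomial.X * q - Polynomial.C ((2 : ℝ) * (m + 1)) * p, ?_⟩⟩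
    intro x
    simp only [physHermite, hp, hq, Polynomial.eval_sub, Polynomial.eval_mul,
      Polynomial.eval_C, Polynomial.eval_X]

lemma integrable_pow_mul_gauss (k : ℕ) :
    Integrable (fun x : ℝ => x ^ k * Real.exp (-x ^ 2)) := by
  have h := integrable_rpow_mul_exp_neg_mul_sq (b := 1) one_pos
      (s := (k : ℝ)) (by exact lt_of_lt_of_le (by norm_num) (Nat.cast_nonneg k))
  have : (fun x : ℝ => x ^ (k : ℝ) * Real.exp (-1 * x ^ 2))
      = fun x : ℝ => x ^ k * Real.exp (-x ^ 2) := by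
    funext x
    rw [Real.rpow_natCast]
    norm_num
  rwa [this] at h

lemma integrable_pow_mul_poly_gauss (p : Polynomial ℝ) (y : ℝ) (j : ℕ) :
    Integrable (fun x : ℝ => x ^ j * p.eval (x * y) * Real.exp (-x ^ 2)) := by
  have heq : (fun x : ℝ => x ^ j * p.eval (x * y) * Real.exp (-x ^ 2))
      = fun x : ℝ => ∑ k ∈ Finset.range (p.natDegree + 1),
          (p.coeff k * y ^ k) * (x ^ (j + k) * Real.exp (-x ^ 2)) := by
    funext x
    rw [Polynomial.eval_eq_sum_range]
    simp only [Finset.mul_sum, Finset.sum_mul]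
    refine Finset.sum_congr rfl fun k _ => ?_
    rw [mul_pow, pow_add]
    ring
  rw [heq]
  exact integrable_finset_sum _ fun k _ => (integrable_pow_mul_gauss (j + k)).const_mul _

lemma tendsto_poly_gauss_atTop (p : Polynomial ℝ) (y : ℝ) :
    Filter.Tendsto (fun x : ℝ => p.eval (x * y) * Real.exp (-x ^ 2))
      Filter.atTop (nhds 0) := by
  have heq : (fun x : ℝ => p.eval (x * y) * Real.exp (-x ^ 2))
      = fun x : ℝ => ∑ k ∈ Finset.range (p.natDegree + 1),
          (p.coeff k * y ^ k) * (x ^ k * Real.exp (-x ^ 2)) := by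
    funext x
    rw [Polynomial.eval_eq_sum_range, Finset.sum_mul]
    refine Finset.sum_congr rfl fun k _ => ?_
    rw [mul_pow]
    ring
  rw [heq]
  have : Filter.Tendsto (fun _ : ℝ => (0 : ℝ)) Filter.atTop (nhds 0) := tendsto_const_nhds
  have hsum : Filter.Tendsto
      (fun x : ℝ => ∑ k ∈ Finset.range (p.natDegree + 1),
        (p.coeff k * y ^ k) * (x ^ k * Real.exp (-x ^ 2))) Filter.atTop
      (nhds (∑ k ∈ Finset.range (p.natDegree + 1), (p.coeff k * y ^ k) * 0)) := by
    refine tendsto_finset_sum _ fun k _ => Filter.Tendsto.const_mul _ ?_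
    have ho := rpow_mul_exp_neg_mul_sq_isLittleO_exp_neg (b := 1) one_pos (k : ℝ)
    have hto : Filter.Tendsto (fun x : ℝ => x ^ (k : ℝ) * Real.exp (-1 * x ^ 2))
        Filter.atTop (nhds 0) :=
      ho.tendsto_zero_of_tendsto (Real.tendsto_exp_atBot.comp
        (Filter.tendsto_id.const_mul_atTop_of_neg (by norm_num)))
    have : (fun x : ℝ => x ^ (k : ℝ) * Real.exp (-1 * x ^ 2))
        = fun x : ℝ => x ^ k * Real.exp (-x ^ 2) := by
      funext x; rw [Real.rpow_natCast]; norm_num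
    rwa [this] at hto
  simpa using hsum

lemma integrable_aux (m j : ℕ) (y : ℝ) :
    Integrable (fun x : ℝ => x ^ j * (Real.exp (-x ^ 2) * physHermite m (x * y))) := by
  obtain ⟨p, hp⟩ := (physHermite_exists_poly m).1
  have heq : (fun x : ℝ => x ^ j * (Real.exp (-x ^ 2) * physHermite m (x * y)))
      = fun x : ℝ => x ^ j * p.eval (x * y) * Real.exp (-x ^ 2) := by
    funext x; rw [hp]; ring
  rw [heq]
  exact integrable_pow_mul_poly_gauss p y j

lemma parts_key (m : ℕ) (y : ℝ) :
    (∫ x : ℝ, x * (Real.exp (-x ^ 2) * physHermite m (x * y)))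
      = y * m * ∫ x : ℝ, Real.exp (-x ^ 2) * physHermite (m - 1) (x * y) := by
  set F : ℝ → ℝ := fun x => Real.exp (-x ^ 2) * physHermite m (x * y) with hF
  set F' : ℝ → ℝ := fun x =>
    (-(2 * x) * Real.exp (-x ^ 2)) * physHermite m (x * y)
      + Real.exp (-x ^ 2) * (2 * m * physHermite (m - 1) (x * y) * y) with hF'
  have hderiv : ∀ x : ℝ, HasDerivAt F (F' x) x := by
    intro x
    have hexp : HasDerivAt (fun x : ℝ => Real.exp (-x ^ 2)) (-(2 * x) * Real.exp (-x ^ 2)) x := by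
      have h1 : HasDerivAt (fun x : ℝ => -x ^ 2) (-(2 * x)) x := by
        simpa using (hasDerivAt_pow 2 x).fun_neg
      simpa [mul_comm] using h1.exp
    have hlin : HasDerivAt (fun x : ℝ => x * y) y x := by
      simpa using (hasDerivAt_id x).mul_const y
    have hH : HasDerivAt (fun x : ℝ => physHermite m (x * y))
        (2 * m * physHermite (m - 1) (x * y) * y) x :=
      HasDerivAt.comp x ((physHermite_hasDerivAt_pair m).1 (x * y)) hlin
    exact hexp.mul hH
  have hint : Integrable F' := by
    have h1 := (integrable_aux m 1 y).const_mul (-2 : ℝ)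
    have h0 := (integrable_aux (m - 1) 0 y).const_mul (2 * (m : ℝ) * y)
    have heq : F' = fun x => (-2 : ℝ) * (x ^ 1 * (Real.exp (-x ^ 2) * physHermite m (x * y)))
        + (2 * (m : ℝ) * y) * (x ^ 0 * (Real.exp (-x ^ 2) * physHermite (m - 1) (x * y))) := by
      funext x; simp only [hF', pow_one, pow_zero]; ring
    rw [heq]
    exact h1.add h0
  have htop : Filter.Tendsto F Filter.atTop (nhds 0) := by
    obtain ⟨p, hp⟩ := (physHermite_exists_poly m).1
    have heq : F = fun x => p.eval (x * y) * Real.exp (-x ^ 2) := by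
      funext x; show Real.exp (-x ^ 2) * physHermite m (x * y) = _; rw [hp]; ring
    rw [heq]
    exact tendsto_poly_gauss_atTop p y
  have hbot : Filter.Tendsto F Filter.atBot (nhds 0) := by
    obtain ⟨p, hp⟩ := (physHermite_exists_poly m).1
    have hcomp : Filter.Tendsto (fun x : ℝ => F (-x)) Filter.atTop (nhds 0) := by
      have heq : (fun x : ℝ => F (-x)) = fun x => p.eval (x * (-y)) * Real.exp (-x ^ 2) := by
        funext x; show Real.exp (-(-x) ^ 2) * physHermite m (-x * y) = _
        rw [hp]; ring_nf
      rw [heq]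
      exact tendsto_poly_gauss_atTop p (-y)
    have h2 := hcomp.comp Filter.tendsto_neg_atBot_atTop
    have heq2 : ((fun x : ℝ => F (-x)) ∘ Neg.neg) = F := by
      funext x; simp
    rwa [heq2] at h2
  have hzero : (∫ x : ℝ, F' x) = 0 := by
    rw [MeasureTheory.integral_of_hasDerivAt_of_tendsto hderiv hint hbot htop]
    simp
  have h1 := (integrable_aux m 1 y).const_mul (-2 : ℝ)
  have h0 := (integrable_aux (m - 1) 0 y).const_mul (2 * (m : ℝ) * y)
  have heq : F' = fun x => (-2 : ℝ) * (x ^ 1 * (Real.exp (-x ^ 2) * physHermite m (x * y)))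
      + (2 * (m : ℝ) * y) * (x ^ 0 * (Real.exp (-x ^ 2) * physHermite (m - 1) (x * y))) := by
    funext x; simp only [hF', pow_one, pow_zero]; ring
  rw [heq] at hzero
  rw [MeasureTheory.integral_add h1 h0, integral_const_mul, integral_const_mul] at hzero
  simp only [pow_one, pow_zero, one_mul] at hzero
  linarith [hzero]
/-- `∫ e^{-x²} H_{2n}(xy) dx = √π (2n)!/n! (y²-1)^n`. -/
theorem integral_hermite_even (n : ℕ) (y : ℝ) :
    (∫ x : ℝ, Real.exp (-x ^ 2) * physHermite (2 * n) (x * y)) =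
      Real.sqrt Real.pi * ((2 * n).factorial : ℝ) / (n.factorial : ℝ) * (y ^ 2 - 1) ^ n := by
  induction n with
  | zero =>
    simp only [Nat.mul_zero, Nat.factorial_zero, physHermite, pow_zero, mul_one, Nat.cast_one]
    have := integral_gaussian (1 : ℝ)
    simp only [neg_mul, one_mul, div_one] at this
    rw [this]
    norm_num
  | succ n ih =>
    have hrec : ∀ x : ℝ, physHermite (2 * (n + 1)) (x * y)
        = 2 * (x * y) * physHermite (2 * n + 1) (x * y)
          - 2 * (2 * n + 1) * physHermite (2 * n) (x * y) := by
      intro x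
      have : 2 * (n + 1) = (2 * n) + 2 := by ring
      rw [this]
      simp only [physHermite]
      push_cast
      ring
    have hsplit : (∫ x : ℝ, Real.exp (-x ^ 2) * physHermite (2 * (n + 1)) (x * y))
        = (2 * y) * (∫ x : ℝ, x * (Real.exp (-x ^ 2) * physHermite (2 * n + 1) (x * y)))
          - (2 * (2 * (n : ℝ) + 1)) * (∫ x : ℝ, Real.exp (-x ^ 2) * physHermite (2 * n) (x * y)) := by
    -- rewrite integrand and use linearity
      have h1 := (integrable_aux (2 * n + 1) 1 y).const_mul (2 * y)
      have h0 := (integrable_aux (2 * n) 0 y).const_mul (2 * (2 * (n : ℝ) + 1))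
      have heq : (fun x : ℝ => Real.exp (-x ^ 2) * physHermite (2 * (n + 1)) (x * y))
          = fun x : ℝ => (2 * y) * (x ^ 1 * (Real.exp (-x ^ 2) * physHermite (2 * n + 1) (x * y)))
            - (2 * (2 * (n : ℝ) + 1)) * (x ^ 0 * (Real.exp (-x ^ 2) * physHermite (2 * n) (x * y))) := by
        funext x
        rw [hrec x]
        simp only [pow_one, pow_zero, one_mul]
        ring
      rw [heq, MeasureTheory.integral_sub h1 h0, integral_const_mul, integral_const_mul]
      simp only [pow_one, pow_zero, one_mul]
    have hkey := parts_key (2 * n + 1) y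
    simp only [Nat.add_sub_cancel] at hkey
    rw [hsplit, hkey, ih]
    have hfac : ((2 * (n + 1)).factorial : ℝ)
        = (2 * n + 2) * (2 * n + 1) * ((2 * n).factorial : ℝ) := by
      have : 2 * (n + 1) = (2 * n + 1) + 1 := by ring
      rw [this, Nat.factorial_succ, Nat.factorial_succ]
      push_cast
      ring
    have hfac2 : ((n + 1).factorial : ℝ) = (n + 1) * (n.factorial : ℝ) := by
      rw [Nat.factorial_succ]; push_cast; ring
    rw [hfac, hfac2]
    have hn : (n.factorial : ℝ) ≠ 0 := by exact_mod_cast Nat.factorial_ne_zero n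
    have hn1 : ((n : ℝ) + 1) ≠ 0 := by positivity
    push_cast
    field_simp
    ring
end
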